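/- Let H₀ ∈ (−1/2, 0), e = −2H₀, θ₀ = π. Then f₁(e, θ₀) = 0 and f₂(e, θ₀) = 0, and the point (e, θ₀) = (−2H₀, π) is a simple zero of the map F = (f₁, f₂) (the Jacobian determinant there is 9(2H₀−1)/(64H₀⁵) ≠ 0). Consequently, by the averaging theorem (Proposition 1 of the paper), for μ > 0 sufficiently small the perturbed system (8) admits a 2π-periodic solution converging as μ → 0 to the Kepler solution with e = −2H₀, θ₀ = π. -/

import Mathlib

open Real

/-- For `H₀ ∈ (−1/2, 0)`, the point `(e, θ₀) = (−2H₀, π)` is a simple zero of the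
averaged map `F = (f₁, f₂)`: both components vanish there and the Jacobian
determinant equals `9(2H₀−1)/(64H₀⁵) ≠ 0`. -/
theorem simple_zero_of_averaged_map (H₀ : ℝ) (hH1 : -1/2 < H₀) (hH2 : H₀ < 0)
    (f₁ f₂ : ℝ → ℝ → ℝ)
    (hf₁ : ∀ e θ₀, f₁ e θ₀ =
      3 * Real.sqrt (1 - e ^ 2) / (32 * H₀ ^ 3 * (1 + e * Real.cos θ₀) ^ ((3:ℝ)/2)) *
        (3 * e ^ 2 - 8 * H₀ - 4 * e * (-1 + 2 * H₀) * Real.cos θ₀ +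
          e ^ 2 * Real.cos (2 * θ₀)))
    (hf₂ : ∀ e θ₀, f₂ e θ₀ =
      3 * e * Real.sqrt (1 - e ^ 2) * Real.sin θ₀ /
        (16 * H₀ ^ 3 * Real.sqrt (1 + e * Real.cos θ₀))) :
    f₁ (-2 * H₀) π = 0 ∧ f₂ (-2 * H₀) π = 0 ∧
    ∃ a b c d : ℝ,
      HasDerivAt (fun e => f₁ e π) a (-2 * H₀) ∧
      HasDerivAt (fun θ₀ => f₁ (-2 * H₀) θ₀) b π ∧
      HasDerivAt (fun e => f₂ e π) c (-2 * H₀) ∧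
      HasDerivAt (fun θ₀ => f₂ (-2 * H₀) θ₀) d π ∧
      a * d - b * c = 9 * (2 * H₀ - 1) / (64 * H₀ ^ 5) ∧
      a * d - b * c ≠ 0 := by
  have hH0 : H₀ ≠ 0 := ne_of_lt hH2
  have he0pos : (0:ℝ) < -2 * H₀ := by linarith
  have he0lt : -2 * H₀ < 1 := by linarith
  have hs2 : (0:ℝ) < 1 - 2 * H₀ := by linarith
  set s : ℝ := Real.sqrt (1 - 2 * H₀) with hs_def
  have hs_sq : s ^ 2 = 1 - 2 * H₀ := Real.sq_sqrt hs2.le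
  have hs_pos : 0 < s := Real.sqrt_pos.mpr hs2
  -- f₂ (· , π) is identically zero
  have hf2const : (fun e => f₂ e π) = fun _ => (0:ℝ) := by
    funext e
    rw [hf₂, Real.sin_pi]
    ring
  have hc : HasDerivAt (fun e => f₂ e π) 0 (-2 * H₀) := by
    rw [hf2const]; exact hasDerivAt_const _ _
  -- f₁ ( · , π) near -2H₀ equals a nicer function
  have hcongr : (fun e => f₁ e π) =ᶠ[nhds (-2 * H₀)]
      (fun e => -(3/(8*H₀^3)) * ((e + 2*H₀) * Real.sqrt (1+e))) := by
    filter_upwards [Ioo_mem_nhds (show (-1:ℝ) < -2*H₀ by linarith) he0lt] with e he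
    obtain ⟨he1, he2⟩ := he
    have h1e : (0:ℝ) < 1 - e := by linarith
    have h1e' : (0:ℝ) < 1 + e := by linarith
    have hse : Real.sqrt (1-e) ^ 2 = 1 - e := Real.sq_sqrt h1e.le
    have hse_pos : 0 < Real.sqrt (1-e) := Real.sqrt_pos.mpr h1e
    rw [hf₁, Real.cos_pi, Real.cos_two_pi]
    have hr : (1 + e * (-1)) ^ ((3:ℝ)/2) = (1-e) * Real.sqrt (1-e) := by
      have h0 : (1:ℝ) + e * (-1) = 1 - e := by ring
      rw [h0, show ((3:ℝ)/2) = 1 + 1/2 by norm_num, Real.rpow_add h1e,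
        Real.rpow_one, ← Real.sqrt_eq_rpow]
    have hsplit : Real.sqrt (1 - e^2) = Real.sqrt (1-e) * Real.sqrt (1+e) := by
      rw [← Real.sqrt_mul h1e.le]; ring_nf
    rw [hr, hsplit]
    field_simp
    nlinarith [sq_nonneg (Real.sqrt (1-e)), sq_nonneg (Real.sqrt (1+e)),
      Real.sq_sqrt h1e'.le, hse, mul_pos hse_pos (Real.sqrt_pos.mpr h1e')]
  -- derivative a
  have ha' : HasDerivAt (fun e => -(3/(8*H₀^3)) * ((e + 2*H₀) * Real.sqrt (1+e)))
      (-(3/(8*H₀^3)) * s) (-2 * H₀) := by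
    have h1 : HasDerivAt (fun e : ℝ => e + 2*H₀) 1 (-2 * H₀) :=
      (hasDerivAt_id _).add_const _
    have h2 : HasDerivAt (fun e : ℝ => 1 + e) 1 (-2 * H₀) :=
      (hasDerivAt_id _).const_add _
    have h3 : HasDerivAt (fun e : ℝ => Real.sqrt (1 + e))
        (1 / (2 * Real.sqrt (1 + (-2*H₀)))) (-2 * H₀) :=
      h2.sqrt (ne_of_gt (by linarith : (0:ℝ) < 1 + -2*H₀))
    have h4 := (h1.mul h3).const_mul (-(3/(8*H₀^3)))
    refine h4.congr_deriv ?_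
    have h5 : (1:ℝ) + -2*H₀ = 1 - 2*H₀ := by ring
    rw [h5, ← hs_def]
    have : (-2*H₀ + 2*H₀ : ℝ) = 0 := by ring
    rw [this]
    ring
  have ha : HasDerivAt (fun e => f₁ e π) (-(3/(8*H₀^3)) * s) (-2 * H₀) :=
    ha'.congr_of_eventuallyEq hcongr
  -- differentiability of θ ↦ f₁ (-2H₀) θ at π
  have hbase : (0:ℝ) < 1 + (-2*H₀) * Real.cos π := by
    rw [Real.cos_pi]; linarith
  have hb' : DifferentiableAt ℝ (fun θ₀ => f₁ (-2 * H₀) θ₀) π := by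
    have hfun : (fun θ₀ => f₁ (-2 * H₀) θ₀) = fun θ₀ =>
        3 * Real.sqrt (1 - (-2*H₀) ^ 2) /
          (32 * H₀ ^ 3 * (1 + (-2*H₀) * Real.cos θ₀) ^ ((3:ℝ)/2)) *
        (3 * (-2*H₀) ^ 2 - 8 * H₀ - 4 * (-2*H₀) * (-1 + 2 * H₀) * Real.cos θ₀ +
          (-2*H₀) ^ 2 * Real.cos (2 * θ₀)) := by
      funext θ₀; exact hf₁ _ _
    rw [hfun]
    have hin : DifferentiableAt ℝ (fun θ₀ : ℝ => 1 + (-2*H₀) * Real.cos θ₀) π :=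
      (Real.differentiable_cos.differentiableAt.const_mul _).const_add _
    have hpow : DifferentiableAt ℝ
        (fun θ₀ : ℝ => (1 + (-2*H₀) * Real.cos θ₀) ^ ((3:ℝ)/2)) π :=
      hin.rpow_const (Or.inr (by norm_num))
    have hden : DifferentiableAt ℝ
        (fun θ₀ : ℝ => 32 * H₀ ^ 3 * (1 + (-2*H₀) * Real.cos θ₀) ^ ((3:ℝ)/2)) π :=
      hpow.const_mul _
    have hdenne : 32 * H₀ ^ 3 * (1 + (-2*H₀) * Real.cos π) ^ ((3:ℝ)/2) ≠ 0 := by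
      apply mul_ne_zero (by positivity)
      exact ne_of_gt (Real.rpow_pos_of_pos hbase _)
    have hq : DifferentiableAt ℝ (fun θ₀ : ℝ =>
        3 * Real.sqrt (1 - (-2*H₀) ^ 2) /
          (32 * H₀ ^ 3 * (1 + (-2*H₀) * Real.cos θ₀) ^ ((3:ℝ)/2))) π :=
      (differentiableAt_const _).div hden hdenne
    have hpoly : DifferentiableAt ℝ (fun θ₀ : ℝ =>
        3 * (-2*H₀) ^ 2 - 8 * H₀ - 4 * (-2*H₀) * (-1 + 2 * H₀) * Real.cos θ₀ +
          (-2*H₀) ^ 2 * Real.cos (2 * θ₀)) π := by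
      apply DifferentiableAt.add
      · exact (differentiableAt_const _).sub
          (Real.differentiable_cos.differentiableAt.const_mul _)
      · exact ((Real.differentiable_cos.differentiableAt.comp π
          ((differentiableAt_id).const_mul 2)).const_mul _)
    exact hq.mul hpoly
  have hb := hb'.hasDerivAt
  -- derivative d
  have hd' : HasDerivAt (fun θ₀ => f₂ (-2 * H₀) θ₀) (3 * s / (8 * H₀ ^ 2)) π := by
    have hfun : (fun θ₀ => f₂ (-2 * H₀) θ₀) = fun θ₀ =>
        3 * (-2*H₀) * Real.sqrt (1 - (-2*H₀) ^ 2) * Real.sin θ₀ /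
          (16 * H₀ ^ 3 * Real.sqrt (1 + (-2*H₀) * Real.cos θ₀)) := by
      funext θ₀; exact hf₂ _ _
    rw [hfun]
    have hn : HasDerivAt (fun θ₀ : ℝ =>
        3 * (-2*H₀) * Real.sqrt (1 - (-2*H₀) ^ 2) * Real.sin θ₀)
        (3 * (-2*H₀) * Real.sqrt (1 - (-2*H₀) ^ 2) * Real.cos π) π :=
      (Real.hasDerivAt_sin π).const_mul _
    have hu : HasDerivAt (fun θ₀ : ℝ => 1 + (-2*H₀) * Real.cos θ₀)
        ((-2*H₀) * (-Real.sin π)) π :=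
      ((Real.hasDerivAt_cos π).const_mul _).const_add _
    have hune : (1 : ℝ) + (-2*H₀) * Real.cos π ≠ 0 := ne_of_gt hbase
    have hDsq : HasDerivAt (fun θ₀ : ℝ => Real.sqrt (1 + (-2*H₀) * Real.cos θ₀))
        (((-2*H₀) * (-Real.sin π)) / (2 * Real.sqrt (1 + (-2*H₀) * Real.cos π))) π :=
      hu.sqrt hune
    have hD : HasDerivAt (fun θ₀ : ℝ =>
        16 * H₀ ^ 3 * Real.sqrt (1 + (-2*H₀) * Real.cos θ₀))
        (16 * H₀ ^ 3 * (((-2*H₀) * (-Real.sin π)) /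
          (2 * Real.sqrt (1 + (-2*H₀) * Real.cos π)))) π :=
      hDsq.const_mul _
    have hDne : 16 * H₀ ^ 3 * Real.sqrt (1 + (-2*H₀) * Real.cos π) ≠ 0 :=
      mul_ne_zero (by positivity) (ne_of_gt (Real.sqrt_pos.mpr hbase))
    have h := hn.div hD hDne
    refine h.congr_deriv ?_
    rw [Real.sin_pi, Real.cos_pi]
    rw [show (1:ℝ) + (-2*H₀) * (-1) = 1 + 2*H₀ by ring]
    rw [show (1:ℝ) - (-2*H₀)^2 = (1-2*H₀)*(1+2*H₀) by ring,
      Real.sqrt_mul hs2.le, ← hs_def]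
    set t : ℝ := Real.sqrt (1 + 2*H₀) with ht_def
    have ht2 : t ^ 2 = 1 + 2*H₀ := Real.sq_sqrt (by linarith)
    have ht_pos : 0 < t := Real.sqrt_pos.mpr (by linarith)
    field_simp
    nlinarith [hs_sq, ht2, hs_pos, ht_pos, mul_pos hs_pos ht_pos]
  -- assemble
  refine ⟨?_, ?_, -(3/(8*H₀^3)) * s, _, 0, 3 * s / (8 * H₀ ^ 2),
    ha, hb, hc, hd', ?_, ?_⟩
  · rw [hf₁, Real.cos_pi, Real.cos_two_pi]
    have hP : (3 * (-2 * H₀) ^ 2 - 8 * H₀ - 4 * (-2 * H₀) * (-1 + 2 * H₀) * (-1) +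
        (-2 * H₀) ^ 2 * 1) = 0 := by ring
    rw [hP, mul_zero]
  · rw [hf₂, Real.sin_pi]; ring
  · rw [show -(3/(8*H₀^3)) * s * (3 * s / (8 * H₀ ^ 2)) - deriv (fun θ₀ => f₁ (-2 * H₀) θ₀) π * 0
      = -(9 * s^2) / (64 * H₀ ^ 5) by ring, hs_sq]
    field_simp
    ring
  · rw [show -(3/(8*H₀^3)) * s * (3 * s / (8 * H₀ ^ 2)) - deriv (fun θ₀ => f₁ (-2 * H₀) θ₀) π * 0
      = -(9 * s^2) / (64 * H₀ ^ 5) by ring, hs_sq]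
    apply div_ne_zero
    · intro h; nlinarith
    · exact fun h => (mul_ne_zero (by norm_num) (pow_ne_zero 5 hH0)) h
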